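/- For every β ∈ (0,1] there exists a constant C_β > 0 such that Σ_{m=1}^∞ x^m / Γ(mβ) ≤ C_β · x · e^{2 x^{1/β}} for all x ≥ 0, where Γ is the Gamma function. -/

import Mathlib

open Real MeasureTheory Set


lemma gamma_lb1 {s : ℝ} (hs : 1 ≤ s) : Real.exp (-2) ≤ Real.Gamma s := by
  rw [Real.Gamma_eq_integral (by linarith : (0:ℝ) < s)]
  have hInt : IntegrableOn (fun x : ℝ => Real.exp (-x) * x ^ (s - 1)) (Ioi 0) :=
    Real.GammaIntegral_convergent (by linarith)
  have hnonneg : 0 ≤ᵐ[volume.restrict (Ioi (0:ℝ))]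
      fun x : ℝ => Real.exp (-x) * x ^ (s - 1) := by
    filter_upwards [ae_restrict_mem measurableSet_Ioi] with x hx
    exact mul_nonneg (Real.exp_pos _).le (Real.rpow_nonneg (le_of_lt hx) _)
  have h1 : ∫ x in Ioc (1:ℝ) 2, Real.exp (-x) * x ^ (s - 1) ≤
      ∫ x in Ioi (0:ℝ), Real.exp (-x) * x ^ (s - 1) := by
    apply setIntegral_mono_set hInt hnonneg
    filter_upwards with x hx
    exact lt_of_lt_of_le one_pos hx.1.le
  refine le_trans ?_ h1
  have h2 : ∫ x in Ioc (1:ℝ) 2, Real.exp (-2) ≤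
      ∫ x in Ioc (1:ℝ) 2, Real.exp (-x) * x ^ (s - 1) := by
    apply setIntegral_mono_on
    · exact integrableOn_const measure_Ioc_lt_top.ne
    · exact hInt.mono_set (fun x hx => lt_of_lt_of_le one_pos hx.1.le)
    · exact measurableSet_Ioc
    · intro x hx
      have hx1 : (1:ℝ) ≤ x := hx.1.le
      have : (1:ℝ) ≤ x ^ (s - 1) := Real.one_le_rpow hx1 (by linarith)
      calc Real.exp (-2) = Real.exp (-2) * 1 := (mul_one _).symm
        _ ≤ Real.exp (-x) * x ^ (s - 1) :=
          mul_le_mul (Real.exp_le_exp.mpr (by linarith [hx.2])) this one_pos.le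
            (Real.exp_pos _).le
  refine le_trans ?_ h2
  rw [setIntegral_const]
  simp [Real.volume_Ioc]
  norm_num

lemma gamma_lbA (k : ℕ) : ∀ s : ℝ, 1 ≤ s → (k : ℝ) ≤ s →
    (Nat.factorial (k - 1) : ℝ) * Real.exp (-2) ≤ Real.Gamma s := by
  induction k with
  | zero => intro s h1 _; simpa using gamma_lb1 h1
  | succ n ih =>
    intro s h1 hks
    match n, ih with
    | 0, _ => simpa using gamma_lb1 h1
    | (n+1), ih =>
      have hn1 : (1:ℝ) ≤ (n:ℝ) + 1 := by have : (0:ℝ) ≤ (n:ℝ) := Nat.cast_nonneg n; linarith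
      have hs2 : (2:ℝ) ≤ s := by push_cast at hks ⊢; linarith
      have hrec : Real.Gamma s = (s - 1) * Real.Gamma (s - 1) := by
        have h0 : s - 1 ≠ 0 := by intro h; rw [sub_eq_zero] at h; linarith
        have := Real.Gamma_add_one (s := s - 1) h0
        rw [sub_add_cancel] at this
        rw [this]
      have h1' : (1:ℝ) ≤ s - 1 := by linarith
      have hks' : ((n+1 : ℕ) : ℝ) ≤ s - 1 := by push_cast at hks ⊢; linarith
      have := ih (s - 1) h1' hks'
      rw [hrec]
      have hfac : (Nat.factorial (n + 1 + 1 - 1) : ℝ)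
          = ((n:ℝ) + 1) * (Nat.factorial (n + 1 - 1) : ℝ) := by
        norm_num [Nat.factorial_succ]
      rw [hfac, mul_assoc]
      have hpos : (0:ℝ) < Real.Gamma (s - 1) :=
        Real.Gamma_pos_of_pos (by linarith)
      have hns : (n:ℝ) + 1 ≤ s - 1 := by push_cast at hks'; linarith
      calc ((n:ℝ) + 1) * ((Nat.factorial (n + 1 - 1) : ℝ) * Real.exp (-2))
          ≤ ((n:ℝ) + 1) * Real.Gamma (s - 1) := by
            apply mul_le_mul_of_nonneg_left this (by positivity)
        _ ≤ (s - 1) * Real.Gamma (s - 1) := by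
            apply mul_le_mul_of_nonneg_right hns hpos.le
        _ = (s - 1) * Real.Gamma (s - 1) := by ring

lemma gamma_lb (k : ℕ) {s : ℝ} (hs : 0 < s) (hks : (k : ℝ) ≤ s) :
    (Nat.factorial (k - 1) : ℝ) * Real.exp (-2) ≤ Real.Gamma s := by
  rcases le_or_gt 1 s with h1 | h1
  · exact gamma_lbA k s h1 hks
  · have hk0 : k = 0 := by
      by_contra h
      have : (1:ℝ) ≤ (k:ℝ) := by exact_mod_cast Nat.one_le_iff_ne_zero.mpr h
      linarith
    subst hk0
    simp only [Nat.zero_sub, Nat.factorial_zero, Nat.cast_one, one_mul]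
    have h2 : Real.exp (-2) ≤ Real.Gamma (s + 1) := gamma_lb1 (by linarith)
    have h3 : Real.Gamma (s + 1) = s * Real.Gamma s := Real.Gamma_add_one hs.ne'
    have hpos : 0 < Real.Gamma s := Real.Gamma_pos_of_pos hs
    nlinarith [hpos]

lemma pow_le_exp_aux (j : ℕ) {t : ℝ} (ht : 0 ≤ t) :
    t ^ j ≤ (Nat.factorial j : ℝ) / 2 ^ j * Real.exp (2 * t) := by
  have h := Real.pow_div_factorial_le_exp (x := 2 * t) (by linarith) j
  have hfac : (0:ℝ) < (Nat.factorial j : ℝ) := by exact_mod_cast j.factorial_pos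
  rw [div_le_iff₀ hfac] at h
  rw [mul_pow] at h
  rw [div_mul_eq_mul_div, le_div_iff₀ (by positivity : (0:ℝ) < 2 ^ j)]
  nlinarith [h]

lemma fac_bound (k : ℕ) :
    (Nat.factorial k : ℝ) / 2 ^ k + (Nat.factorial (k+1) : ℝ) / 2 ^ (k+1) ≤
      2 * ((k:ℝ)+1)^2 / 2 ^ k * (Nat.factorial (k-1) : ℝ) := by
  match k with
  | 0 => norm_num
  | (n+1) =>
    have h1 : Nat.factorial (n+1) = (n+1) * Nat.factorial n := Nat.factorial_succ n
    have h2 : Nat.factorial (n+2) = (n+2) * ((n+1) * Nat.factorial n) := by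
      rw [Nat.factorial_succ, h1]
    have hF : (0:ℝ) ≤ (Nat.factorial n : ℝ) := Nat.cast_nonneg _
    have hp : (0:ℝ) < 2 ^ (n+1) := by positivity
    simp only [Nat.add_sub_cancel]
    rw [h1, h2]
    push_cast
    rw [pow_succ (2:ℝ) (n+1), div_add_div _ _ (ne_of_gt hp) (ne_of_gt (by positivity : (0:ℝ) < 2^(n+1)*2)), div_mul_eq_mul_div, div_le_div_iff₀ (by positivity) hp]
    have hn : (0:ℝ) ≤ (n:ℝ) := Nat.cast_nonneg n
    have key : (n:ℝ)*2 + 1*2 + ((n:ℝ)+2)*((n:ℝ)+1) ≤ 2*((n:ℝ)+2)^2 := by nlinarith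
    nlinarith [mul_pos hp hp, mul_nonneg hF (mul_pos hp hp).le, mul_nonneg (mul_nonneg hF (mul_pos hp hp).le) hn]

lemma term_bound (β : ℝ) (hβ0 : 0 < β) (hβ1 : β ≤ 1) (m : ℕ) {x : ℝ} (hx : 0 < x) :
    x ^ (m+1) / Real.Gamma (((m+1:ℕ):ℝ) * β) ≤
      (4 * Real.exp 2 * ((m:ℝ)+1)^2 * ((2:ℝ) ^ (-β)) ^ m) * (x * Real.exp (2 * x ^ (1/β))) := by
  set y : ℝ := x ^ (1/β) with hy
  have hy0 : 0 < y := Real.rpow_pos_of_pos hx _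
  set k : ℕ := Nat.floor ((m:ℝ) * β) with hkdef
  have hmb0 : 0 ≤ (m:ℝ) * β := by positivity
  have hk1 : (k:ℝ) ≤ (m:ℝ) * β := Nat.floor_le hmb0
  have hk2 : (m:ℝ) * β < (k:ℝ) + 1 := Nat.lt_floor_add_one _
  have hkm : (k:ℝ) ≤ (m:ℝ) := le_trans hk1 (by nlinarith [Nat.cast_nonneg (α := ℝ) m])
  have hs : (0:ℝ) < ((m+1:ℕ):ℝ) * β := by positivity
  have hGpos : 0 < Real.Gamma (((m+1:ℕ):ℝ) * β) := Real.Gamma_pos_of_pos hs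
  -- x^m = y^(m*β)
  have hxm : x ^ m = y ^ ((m:ℝ) * β) := by
    rw [hy, ← Real.rpow_natCast x m, ← Real.rpow_mul hx.le]
    congr 1
    field_simp
  -- y^(m*β) ≤ y^k + y^(k+1)
  have hstep1 : y ^ ((m:ℝ) * β) ≤ y ^ k + y ^ (k+1) := by
    rcases le_or_gt y 1 with h | h
    · have := Real.rpow_le_rpow_of_exponent_ge hy0 h hk1
      rw [Real.rpow_natCast] at this
      have h2 : (0:ℝ) ≤ y ^ (k+1) := by positivity
      linarith
    · have hle : (m:ℝ) * β ≤ ((k+1:ℕ):ℝ) := by push_cast; linarith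
      have := Real.rpow_le_rpow_of_exponent_le h.le hle
      rw [Real.rpow_natCast] at this
      have h2 : (0:ℝ) ≤ y ^ k := by positivity
      linarith
  -- y^j ≤ j!/2^j exp(2y)
  have hstep2 : y ^ ((m:ℝ) * β) ≤
      (2 * ((k:ℝ)+1)^2 / 2 ^ k * (Nat.factorial (k-1) : ℝ)) * Real.exp (2 * y) := by
    have e1 := pow_le_exp_aux k hy0.le
    have e2 := pow_le_exp_aux (k+1) hy0.le
    have e3 := fac_bound k
    have hexp : (0:ℝ) < Real.exp (2 * y) := Real.exp_pos _
    calc y ^ ((m:ℝ) * β) ≤ y ^ k + y ^ (k+1) := hstep1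
      _ ≤ ((Nat.factorial k : ℝ) / 2 ^ k + (Nat.factorial (k+1) : ℝ) / 2 ^ (k+1)) * Real.exp (2*y) := by
          rw [add_mul]; exact add_le_add e1 e2
      _ ≤ (2 * ((k:ℝ)+1)^2 / 2 ^ k * (Nat.factorial (k-1) : ℝ)) * Real.exp (2 * y) :=
          mul_le_mul_of_nonneg_right e3 hexp.le
  -- Gamma lower bound
  have hGlb : (Nat.factorial (k-1) : ℝ) * Real.exp (-2) ≤ Real.Gamma (((m+1:ℕ):ℝ) * β) := by
    apply gamma_lb k hs
    calc (k:ℝ) ≤ (m:ℝ) * β := hk1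
      _ ≤ ((m+1:ℕ):ℝ) * β := by push_cast; nlinarith
  have hGlbpos : (0:ℝ) < (Nat.factorial (k-1) : ℝ) * Real.exp (-2) := by positivity
  -- 2^(-k) ≤ 2 * q^m
  have hq : (1:ℝ) / 2 ^ k ≤ 2 * ((2:ℝ) ^ (-β)) ^ m := by
    have hqm : ((2:ℝ) ^ (-β)) ^ m = (2:ℝ) ^ (-β * (m:ℝ)) := by
      rw [← Real.rpow_natCast ((2:ℝ) ^ (-β)) m, ← Real.rpow_mul (by norm_num : (0:ℝ) ≤ 2)]
    have h2k : ((2:ℝ) ^ k : ℝ) = (2:ℝ) ^ ((k:ℕ):ℝ) := by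
      rw [Real.rpow_natCast]
    have hmono : (2:ℝ) ^ ((m:ℝ) * β - 1) ≤ (2:ℝ) ^ ((k:ℕ):ℝ) :=
      Real.rpow_le_rpow_of_exponent_le one_le_two (by linarith)
    rw [hqm, div_le_iff₀ (by positivity : (0:ℝ) < 2 ^ k)]
    have key : (2:ℝ) * (2:ℝ) ^ (-β * (m:ℝ)) * (2:ℝ) ^ ((m:ℝ) * β - 1) = 1 := by
      have hsum : (2:ℝ) ^ (-β * (m:ℝ)) * (2:ℝ) ^ ((m:ℝ) * β - 1) = (2:ℝ) ^ (-(1:ℝ)) := by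
        rw [← Real.rpow_add two_pos]; congr 1; ring
      rw [mul_assoc, hsum, Real.rpow_neg_one]; norm_num
    calc (1:ℝ) = 2 * (2:ℝ) ^ (-β * (m:ℝ)) * (2:ℝ) ^ ((m:ℝ) * β - 1) := key.symm
      _ ≤ 2 * (2:ℝ) ^ (-β * (m:ℝ)) * (2:ℝ) ^ ((k:ℕ):ℝ) := by
          apply mul_le_mul_of_nonneg_left hmono (by positivity)
      _ = 2 * (2:ℝ) ^ (-β * (m:ℝ)) * 2 ^ k := by rw [← h2k]
  -- assemble
  have hxpow : x ^ (m+1) = x * y ^ ((m:ℝ) * β) := by rw [pow_succ', hxm]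
  rw [hxpow]
  calc x * y ^ ((m:ℝ) * β) / Real.Gamma (((m+1:ℕ):ℝ) * β)
      ≤ x * ((2 * ((k:ℝ)+1)^2 / 2 ^ k * (Nat.factorial (k-1) : ℝ)) * Real.exp (2 * y)) /
        ((Nat.factorial (k-1) : ℝ) * Real.exp (-2)) := by
        apply div_le_div₀ (by positivity) _ hGlbpos hGlb
        apply mul_le_mul_of_nonneg_left hstep2 hx.le
    _ = x * Real.exp (2 * y) * (2 * ((k:ℝ)+1)^2 / 2 ^ k) * Real.exp 2 := by
        have hfne : (Nat.factorial (k-1) : ℝ) ≠ 0 := by positivity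
        rw [Real.exp_neg]
        field_simp
    _ ≤ x * Real.exp (2 * y) * (2 * ((k:ℝ)+1)^2 * (2 * ((2:ℝ) ^ (-β)) ^ m)) * Real.exp 2 := by
        apply mul_le_mul_of_nonneg_right _ (Real.exp_pos 2).le
        apply mul_le_mul_of_nonneg_left _ (by positivity)
        rw [div_eq_mul_one_div]
        exact mul_le_mul_of_nonneg_left hq (by positivity)
    _ ≤ x * Real.exp (2 * y) * (2 * ((m:ℝ)+1)^2 * (2 * ((2:ℝ) ^ (-β)) ^ m)) * Real.exp 2 := by
        have h1 : ((k:ℝ)+1)^2 ≤ ((m:ℝ)+1)^2 := by nlinarith [Nat.cast_nonneg (α := ℝ) k]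
        have hqpos : (0:ℝ) ≤ ((2:ℝ) ^ (-β)) ^ m := by positivity
        apply mul_le_mul_of_nonneg_right _ (Real.exp_pos 2).le
        apply mul_le_mul_of_nonneg_left _ (by positivity)
        apply mul_le_mul_of_nonneg_right _ (by positivity)
        linarith
    _ = (4 * Real.exp 2 * ((m:ℝ)+1)^2 * ((2:ℝ) ^ (-β)) ^ m) * (x * Real.exp (2 * y)) := by ring

/-- For every `β ∈ (0,1]` there is `C_β > 0` with
`Σ_{m=1}^∞ x^m / Γ(mβ) ≤ C_β x e^{2 x^{1/β}}` for all `x ≥ 0`. -/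
theorem stmt7 (β : ℝ) (hβ0 : 0 < β) (hβ1 : β ≤ 1) :
    ∃ C > (0 : ℝ), ∀ x : ℝ, 0 ≤ x →
      (∑' m : ℕ, x ^ (m + 1) / Real.Gamma ((m + 1 : ℕ) * β)) ≤
        C * x * Real.exp (2 * x ^ (1 / β)) := by
  set q : ℝ := (2:ℝ) ^ (-β) with hqdef
  have hq0 : 0 < q := Real.rpow_pos_of_pos two_pos _
  have hq1 : q < 1 := Real.rpow_lt_one_of_one_lt_of_neg one_lt_two (by linarith)
  have hqn : ‖q‖ < 1 := by rw [Real.norm_eq_abs, abs_of_pos hq0]; exact hq1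
  have S2 : Summable (fun m : ℕ => ((m:ℝ))^2 * q^m) :=
    summable_pow_mul_geometric_of_norm_lt_one 2 hqn
  have S1 : Summable (fun m : ℕ => ((m:ℝ))^1 * q^m) :=
    summable_pow_mul_geometric_of_norm_lt_one 1 hqn
  have S0 : Summable (fun m : ℕ => q^m) := summable_geometric_of_lt_one hq0.le hq1
  have Sb : Summable (fun m : ℕ => ((m:ℝ)+1)^2 * q^m) := by
    have heq : (fun m : ℕ => ((m:ℝ)+1)^2 * q^m)
        = fun m : ℕ => ((m:ℝ)^2*q^m + 2*((m:ℝ)^1*q^m)) + q^m := by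
      funext m; ring
    rw [heq]
    exact (S2.add (S1.mul_left 2)).add S0
  have Sc : Summable (fun m : ℕ => 4 * Real.exp 2 * (((m:ℝ)+1)^2 * q^m)) := Sb.mul_left _
  set S : ℝ := ∑' m : ℕ, ((m:ℝ)+1)^2 * q^m with hSdef
  have hS0 : 0 ≤ S := tsum_nonneg (fun m => by positivity)
  refine ⟨4 * Real.exp 2 * S + 1, by positivity, ?_⟩
  intro x hx
  rcases eq_or_lt_of_le hx with h | hx
  · rw [← h]
    simp
  · have hGpos : ∀ m : ℕ, 0 < Real.Gamma (((m+1:ℕ):ℝ) * β) := fun m =>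
      Real.Gamma_pos_of_pos (by positivity)
    have hterm : ∀ m : ℕ, x ^ (m+1) / Real.Gamma (((m+1:ℕ):ℝ) * β) ≤
        (4 * Real.exp 2 * (((m:ℝ)+1)^2 * q^m)) * (x * Real.exp (2 * x ^ (1/β))) := by
      intro m
      have := term_bound β hβ0 hβ1 m hx
      calc x ^ (m+1) / Real.Gamma (((m+1:ℕ):ℝ) * β)
          ≤ (4 * Real.exp 2 * ((m:ℝ)+1)^2 * ((2:ℝ) ^ (-β)) ^ m) * (x * Real.exp (2 * x ^ (1/β))) := this
        _ = (4 * Real.exp 2 * (((m:ℝ)+1)^2 * q^m)) * (x * Real.exp (2 * x ^ (1/β))) := by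
            rw [hqdef]; ring
    have hnn : ∀ m : ℕ, 0 ≤ x ^ (m+1) / Real.Gamma (((m+1:ℕ):ℝ) * β) := fun m =>
      div_nonneg (by positivity) (hGpos m).le
    have Sg : Summable (fun m : ℕ =>
        (4 * Real.exp 2 * (((m:ℝ)+1)^2 * q^m)) * (x * Real.exp (2 * x ^ (1/β)))) :=
      Sc.mul_right _
    have Sf : Summable (fun m : ℕ => x ^ (m+1) / Real.Gamma (((m+1:ℕ):ℝ) * β)) :=
      Summable.of_nonneg_of_le hnn hterm Sg
    have hK : 0 ≤ x * Real.exp (2 * x ^ (1/β)) := by positivity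
    calc (∑' m : ℕ, x ^ (m+1) / Real.Gamma (((m+1:ℕ):ℝ) * β))
        ≤ ∑' m : ℕ, (4 * Real.exp 2 * (((m:ℝ)+1)^2 * q^m)) * (x * Real.exp (2 * x ^ (1/β))) :=
          Summable.tsum_le_tsum hterm Sf Sg
      _ = (∑' m : ℕ, 4 * Real.exp 2 * (((m:ℝ)+1)^2 * q^m)) * (x * Real.exp (2 * x ^ (1/β))) :=
          tsum_mul_right
      _ = 4 * Real.exp 2 * S * (x * Real.exp (2 * x ^ (1/β))) := by
          rw [tsum_mul_left, hSdef]
      _ ≤ (4 * Real.exp 2 * S + 1) * (x * Real.exp (2 * x ^ (1/β))) := by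
          apply mul_le_mul_of_nonneg_right _ hK
          linarith
      _ = (4 * Real.exp 2 * S + 1) * x * Real.exp (2 * x ^ (1/β)) := by ring
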